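/- Let w be a word over alphabet Σ, k ∈ ℕ, and gc = (C_1,…,C_{k-1}) a tuple of gap constraints each of which is a decidable language. Construct the NFA A with states Q = {(0,0)} ∪ {(i,j) : 1 ≤ i ≤ |w|, 1 ≤ j ≤ k}, initial state (0,0), accepting states {(i,k) : i ≥ k}, and transitions δ((i,j), a) ∋ (i', j+1) whenever i' > i, w[i'] = a, and w[i+1..i'-1] ∈ C_j (with the convention C_0 = Σ* for transitions from (0,0), where w[1..i'-1] is unconstrained—i.e., transitions from (0,0) on letter a go to all (i',1) with w[i'] = a). Then for every string p ∈ Σ^k, the number of distinct accepting paths of A labelled p equals the number of distinct embeddings e : [k] → [|w|] satisfying gc with p = w[e(1)]…w[e(k)]. -/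

import Mathlib

/-- Positions in `w` are 1-indexed (so letter at position `i` is `w[i-1]?`). States of the
NFA are pairs `(i, j)` (position in `w`, position in `p`), the initial state is `(0,0)`,
and accepting states are `(i, k)` with `i ≥ k`. A transition on letter `a` from `(i, j)`
goes to `(i', j+1)` whenever `i' > i`, `w[i'] = a`, and the factor `w[i+1..i'-1]` lies in
`C j` (transitions out of the initial state `(0,0)` are unconstrained). The number of
accepting paths labelled `p` equals the number of embeddings of `p` into `w` (1-indexed,
strictly increasing, letter matching) satisfying the gap constraints `C`. -/
theorem stmt12 {α : Type*} (w p : List α) (k : ℕ) (C : ℕ → Set (List α))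
    (hp : p.length = k) :
    Set.ncard {P : Fin (k + 1) → ℕ × ℕ |
        P 0 = (0, 0) ∧
        (∀ t : Fin k,
          (P t.castSucc).1 < (P t.succ).1 ∧
          (P t.succ).2 = (P t.castSucc).2 + 1 ∧
          w[(P t.succ).1 - 1]? = p[(t : ℕ)]? ∧
          ((t : ℕ) ≠ 0 →
            (w.drop (P t.castSucc).1).take ((P t.succ).1 - (P t.castSucc).1 - 1)
              ∈ C (P t.castSucc).2)) ∧
        (P (Fin.last k)).2 = k ∧ k ≤ (P (Fin.last k)).1} =
      Set.ncard {e : Fin k → ℕ |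
        (∀ s t : Fin k, s < t → e s < e t) ∧
        (∀ t : Fin k, 1 ≤ e t ∧ e t ≤ w.length) ∧
        (∀ t : Fin k, w[e t - 1]? = p[(t : ℕ)]?) ∧
        (∀ t : Fin k, ∀ h : (t : ℕ) + 1 < k,
          (w.drop (e t)).take (e ⟨(t : ℕ) + 1, h⟩ - e t - 1) ∈ C ((t : ℕ) + 1))} := by
  classical
  set S1 : Set (Fin (k + 1) → ℕ × ℕ) := {P : Fin (k + 1) → ℕ × ℕ |
        P 0 = (0, 0) ∧
        (∀ t : Fin k,
          (P t.castSucc).1 < (P t.succ).1 ∧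
          (P t.succ).2 = (P t.castSucc).2 + 1 ∧
          w[(P t.succ).1 - 1]? = p[(t : ℕ)]? ∧
          ((t : ℕ) ≠ 0 →
            (w.drop (P t.castSucc).1).take ((P t.succ).1 - (P t.castSucc).1 - 1)
              ∈ C (P t.castSucc).2)) ∧
        (P (Fin.last k)).2 = k ∧ k ≤ (P (Fin.last k)).1} with hS1
  set S2 : Set (Fin k → ℕ) := {e : Fin k → ℕ |
        (∀ s t : Fin k, s < t → e s < e t) ∧
        (∀ t : Fin k, 1 ≤ e t ∧ e t ≤ w.length) ∧
        (∀ t : Fin k, w[e t - 1]? = p[(t : ℕ)]?) ∧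
        (∀ t : Fin k, ∀ h : (t : ℕ) + 1 < k,
          (w.drop (e t)).take (e ⟨(t : ℕ) + 1, h⟩ - e t - 1) ∈ C ((t : ℕ) + 1))} with hS2
  set F : (Fin (k + 1) → ℕ × ℕ) → (Fin k → ℕ) := fun P t => (P t.succ).1 with hF
  -- second coordinates of a path are determined
  have hsnd : ∀ P ∈ S1, ∀ i : Fin (k + 1), (P i).2 = (i : ℕ) := by
    intro P hP i
    obtain ⟨h0, hstep, _⟩ := hP
    induction i using Fin.induction with
    | zero => simp [h0]
    | succ t ih => rw [(hstep t).2.1, ih]; simp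
  have hfst : ∀ P ∈ S1, StrictMono (fun i : Fin (k + 1) => (P i).1) := by
    intro P hP
    exact Fin.strictMono_iff_lt_succ.mpr fun t => (hP.2.1 t).1
  have key : S2 = F '' S1 := by
    ext e
    constructor
    · rintro ⟨hinc, hbd, hlet, hgap⟩
      -- lower bound on e
      have hlow : ∀ n (hn : n < k), n + 1 ≤ e ⟨n, hn⟩ := by
        intro n
        induction n with
        | zero => intro hn; exact (hbd ⟨0, hn⟩).1
        | succ m ih =>
          intro hn
          have hm : m < k := Nat.lt_of_succ_lt hn
          have h1 := hinc ⟨m, hm⟩ ⟨m + 1, hn⟩ (by simp [Fin.lt_def])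
          have h2 := ih hm
          omega
      set Q : Fin (k + 1) → ℕ × ℕ := Fin.cases (0, 0) (fun t => (e t, (t : ℕ) + 1)) with hQ
      have hQ0 : Q 0 = (0, 0) := rfl
      have hQs : ∀ t : Fin k, Q t.succ = (e t, (t : ℕ) + 1) := fun t => Fin.cases_succ _
      refine ⟨Q, ⟨hQ0, ?_, ?_, ?_⟩, ?_⟩
      · intro t
        obtain ⟨tv, ht⟩ := t
        match tv, ht with
        | 0, ht =>
          have hcs : ((⟨0, ht⟩ : Fin k).castSucc : Fin (k + 1)) = 0 := rfl
          rw [hQs ⟨0, ht⟩, hcs, hQ0]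
          refine ⟨?_, by simp, by simpa using hlet ⟨0, ht⟩, by simp⟩
          simpa using Nat.lt_of_succ_le (hlow 0 ht)
        | m + 1, ht =>
          have hm : m < k := Nat.lt_of_succ_lt ht
          have hcs : ((⟨m + 1, ht⟩ : Fin k).castSucc : Fin (k + 1)) =
              (⟨m, hm⟩ : Fin k).succ := rfl
          rw [hQs ⟨m + 1, ht⟩, hcs, hQs ⟨m, hm⟩]
          refine ⟨hinc ⟨m, hm⟩ ⟨m + 1, ht⟩ (by simp [Fin.lt_def]),
            by simp, by simpa using hlet ⟨m + 1, ht⟩, ?_⟩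
          intro _
          simpa using hgap ⟨m, hm⟩ ht
      · cases k with
        | zero => simp [hQ0, show (Fin.last 0) = 0 from rfl]
        | succ n =>
          have hl : (Fin.last (n + 1)) = (⟨n, Nat.lt_succ_self n⟩ : Fin (n + 1)).succ := rfl
          rw [hl, hQs ⟨n, Nat.lt_succ_self n⟩]
      · cases k with
        | zero => simp [show (Fin.last 0) = 0 from rfl, hQ0]
        | succ n =>
          have hl : (Fin.last (n + 1)) = (⟨n, Nat.lt_succ_self n⟩ : Fin (n + 1)).succ := rfl
          rw [hl, hQs ⟨n, Nat.lt_succ_self n⟩]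
          exact hlow n (Nat.lt_succ_self n)
      · funext t
        simp only [hF]
        rw [hQs t]
    · rintro ⟨P, hP, rfl⟩
      obtain ⟨h0, hstep, hacc⟩ := hP
      have hmono := hfst P ⟨h0, hstep, hacc⟩
      have hs := hsnd P ⟨h0, hstep, hacc⟩
      refine ⟨?_, ?_, fun t => (hstep t).2.2.1, ?_⟩
      · intro s t hst
        exact hmono (by simpa using hst)
      · intro t
        have hpos : 0 < (P t.succ).1 := by
          have : (P (0 : Fin (k + 1))).1 < (P t.succ).1 := hmono (by simp [Fin.lt_def])
          rw [h0] at this; exact this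
        constructor
        · simpa [hF] using Nat.succ_le_of_lt hpos
        · have hlet := (hstep t).2.2.1
          rw [List.getElem?_eq_getElem (show (t : ℕ) < p.length by omega)] at hlet
          have hb : (P t.succ).1 - 1 < w.length := by
            by_contra hc
            rw [List.getElem?_eq_none (by omega)] at hlet
            simp at hlet
          simp only [hF]
          omega
      · intro t h
        have := (hstep ⟨(t : ℕ) + 1, h⟩).2.2.2 (by simp)
        have hcs : ((⟨(t : ℕ) + 1, h⟩ : Fin k).castSucc : Fin (k + 1)) = t.succ := rfl
        rw [hcs] at this
        rw [hs t.succ] at this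
        simpa [hF] using this
  rw [key]
  refine (Set.ncard_image_of_injOn ?_).symm
  intro P hP Q hQ hPQ
  funext i
  induction i using Fin.cases with
  | zero => rw [hP.1, hQ.1]
  | succ t =>
    have h1 : (P t.succ).1 = (Q t.succ).1 := congrFun hPQ t
    have h2 : (P t.succ).2 = (Q t.succ).2 := by
      rw [hsnd P hP, hsnd Q hQ]
    exact Prod.ext h1 h2
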